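/- Let V be an integral variety over an algebraically closed field, W an integral closed formal subscheme of the formal completion of V at a smooth point, and M an O_V-submodule of the free module O_V^{⊕r}. If the rank over the function field of W of the image of M ⊗ k(W) in k(W)^{⊕r} is strictly less than the rank of M ⊗ k(V) over the function field of V, then W is not Zariski dense in V. -/

import Mathlib

/-!
STATEMENT 1.  As in Statement 0, `V` is an integral variety over an algebraically closed field
`k` of characteristic zero with (integral) affine coordinate ring `A`, `W` is an integral
closed formal subscheme of the formal completion of `V` at a smooth point, with coordinate
ring `B`, and `φ : A →ₐ[k] B` is the restriction map; `W` is Zariski dense in `V` iff `φ` is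
injective.  `M ⊆ O_V^{⊕r}` is an `O_V`-submodule.  If the rank over `k(W)` of the image of
`M ⊗ k(W)` in `k(W)^{⊕r}` is strictly smaller than the rank of `M ⊗ k(V)` over `k(V)`, then
`W` is not Zariski dense in `V`.
-/

open Matrix

lemma linearIndependent_map_field {F K : Type*} [Field F] [Field K] (ψ : F →+* K)
    {n r : ℕ} (v : Fin n → Fin r → F) (hv : LinearIndependent F v) :
    LinearIndependent K (fun i => ψ ∘ v i) := by
  classical
  set Mt : Matrix (Fin n) (Fin r) F := Matrix.of v with hMt
  have hinj : Function.Injective Mt.vecMul := Matrix.vecMul_injective_iff.mpr hv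
  have hker : LinearMap.ker Mt.vecMulLinear = ⊥ := by
    rw [LinearMap.ker_eq_bot]
    simpa [Matrix.coe_vecMulLinear] using hinj
  obtain ⟨g, hg⟩ := Mt.vecMulLinear.exists_leftInverse_of_injective hker
  set Bm : Matrix (Fin n) (Fin r) F := LinearMap.toMatrix' g with hBm
  have hBM : ∀ x : Fin n → F, Bm.mulVec (Mt.vecMul x) = x := by
    intro x
    have h1 : Bm.mulVec (Mt.vecMul x) = g (Mt.vecMulLinear x) := by
      rw [hBm]
      rw [← Matrix.toLin'_apply, Matrix.toLin'_toMatrix']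
      rfl
    rw [h1]
    exact LinearMap.congr_fun hg x
  have hBMt : Bm * Mtᵀ = 1 := by
    apply Matrix.toLin'.injective
    apply LinearMap.ext
    intro x
    simp only [Matrix.toLin'_apply, Matrix.toLin'_one, LinearMap.id_apply,
      ← Matrix.mulVec_mulVec, Matrix.mulVec_transpose]
    exact hBM x
  have hK : (Bm.map ψ) * ((Mt.map ψ)ᵀ) = 1 := by
    rw [← Matrix.transpose_map, ← Matrix.map_mul, hBMt, Matrix.map_one ψ (map_zero ψ) (map_one ψ)]
  have hinjK : Function.Injective (Mt.map ψ).vecMul := by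
    intro x y h
    have hx : ∀ z : Fin n → K, (Bm.map ψ).mulVec ((Mt.map ψ).vecMul z) = z := by
      intro z
      rw [← Matrix.mulVec_transpose, Matrix.mulVec_mulVec, hK, Matrix.one_mulVec]
    calc x = (Bm.map ψ).mulVec ((Mt.map ψ).vecMul x) := (hx x).symm
    _ = (Bm.map ψ).mulVec ((Mt.map ψ).vecMul y) := congrArg _ h
    _ = y := hx y
  have := Matrix.vecMul_injective_iff.mp hinjK
  exact this

universe u

theorem stmt_1
    (k : Type*) [Field k] [IsAlgClosed k] [CharZero k]
    (A B : Type u) [CommRing A] [IsDomain A] [Algebra k A]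
    [CommRing B] [IsDomain B] [Algebra k B]
    (φ : A →ₐ[k] B)
    (r : ℕ) (M : Submodule A (Fin r → A))
    (hrank :
      Module.rank (FractionRing B)
        (Submodule.span (FractionRing B)
          ((fun m : Fin r → A => fun j => algebraMap B (FractionRing B) (φ (m j))) '' M)) <
      Module.rank (FractionRing A)
        (Submodule.span (FractionRing A)
          ((fun m : Fin r → A => fun j => algebraMap A (FractionRing A) (m j)) '' M))) :
    ¬ Function.Injective φ := by
  intro hinj
  classical
  have hginj : Function.Injective ((algebraMap B (FractionRing B)).comp (φ : A →+* B)) :=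
    (IsFractionRing.injective B (FractionRing B)).comp hinj
  set ψ : FractionRing A →+* FractionRing B := IsFractionRing.lift hginj with hψdef
  have hψ : ∀ a : A, ψ (algebraMap A (FractionRing A) a) = algebraMap B (FractionRing B) (φ a) :=
    fun a => IsFractionRing.lift_algebraMap hginj a
  set SA : Set (Fin r → FractionRing A) :=
    (fun m : Fin r → A => fun j => algebraMap A (FractionRing A) (m j)) '' M with hSA
  set SB : Set (Fin r → FractionRing B) :=
    (fun m : Fin r → A => fun j => algebraMap B (FractionRing B) (φ (m j))) '' M with hSB
  obtain ⟨b, hbS, hspan, hli⟩ := exists_linearIndependent (FractionRing A) SA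
  have hfin : b.Finite := hli.setFinite
  have : Finite b := hfin.to_subtype
  obtain ⟨n, ⟨e⟩⟩ := Finite.exists_equiv_fin b
  have hcard : Cardinal.mk b = (n : Cardinal.{u}) := by
    have h := Cardinal.mk_congr (e.trans (Equiv.ulift.{u,0}).symm)
    simpa [Cardinal.mk_uLift] using h
  have hch : ∀ i : Fin n, ∃ mm : Fin r → A, mm ∈ M ∧
      (fun j => algebraMap A (FractionRing A) (mm j)) = ((e.symm i : b) : Fin r → FractionRing A) := by
    intro i
    obtain ⟨mm, hmm, heq⟩ := hbS (e.symm i).2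
    exact ⟨mm, hmm, heq⟩
  choose mvec hmem heq using hch
  set vA : Fin n → Fin r → FractionRing A :=
    fun i j => algebraMap A (FractionRing A) (mvec i j) with hvAdef
  have hvA : LinearIndependent (FractionRing A) vA := by
    have h1 : LinearIndependent (FractionRing A)
        (fun i : Fin n => ((e.symm i : b) : Fin r → FractionRing A)) :=
      hli.comp e.symm e.symm.injective
    convert h1 using 1
    funext i
    exact heq i
  have hw := linearIndependent_map_field ψ vA hvA
  have hwB : LinearIndependent (FractionRing B)
      (fun i : Fin n => fun j => algebraMap B (FractionRing B) (φ (mvec i j))) := by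
    have hfun : (fun i : Fin n => fun j => algebraMap B (FractionRing B) (φ (mvec i j)))
        = fun i => ⇑ψ ∘ vA i := by
      funext i j
      exact (hψ (mvec i j)).symm
    rw [hfun]
    exact hw
  -- n ≤ rank of span SB
  set w' : Fin n → (Submodule.span (FractionRing B) SB) :=
    fun i => ⟨fun j => algebraMap B (FractionRing B) (φ (mvec i j)),
      Submodule.subset_span ⟨mvec i, hmem i, rfl⟩⟩ with hw'
  have hw'li : LinearIndependent (FractionRing B) w' := by
    apply LinearIndependent.of_comp (Submodule.span (FractionRing B) SB).subtype
    have hcoe : ((Submodule.span (FractionRing B) SB).subtype ∘ w')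
        = fun i : Fin n => fun j => algebraMap B (FractionRing B) (φ (mvec i j)) := rfl
    rw [hcoe]
    exact hwB
  have hle : (n : Cardinal.{u}) ≤
      Module.rank (FractionRing B) (Submodule.span (FractionRing B) SB) := by
    have := hw'li.cardinal_lift_le_rank
    simpa using this
  -- rank of span SA = n
  have heqrank : Module.rank (FractionRing A) (Submodule.span (FractionRing A) SA)
      = (n : Cardinal.{u}) := by
    rw [← hspan, rank_span_set hli, hcard]
  rw [heqrank] at hrank
  exact absurd (lt_of_lt_of_le hrank hle) (lt_irrefl _)
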